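/- arXiv:1712.07072 — 4 statements merged into one kernel-verified Lean document; each statement's English description precedes it below -/
import Mathlib

section
/- For every n ≥ 2l, the complete bipartite graph K_{⌊n/2⌋,⌈n/2⌉} contains at least (1/l!) · ∏_{i=0}^{l-1} ⌊(n-2i)²/4⌋ matchings of size l. Consequently the maximum number of size-l matchings over all triangle-free n-vertex graphs equals (1/l!) · ∏_{i=0}^{l-1} ⌊(n-2i)²/4⌋. -/
open SimpleGraph

universe u v

/-- An (injective) copy of the graph `F` inside the graph `G`. -/
structure GraphCopy {α : Type u} {β : Type v} (F : SimpleGraph α) (G : SimpleGraph β) where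
  toFun : α → β
  inj : Function.Injective toFun
  adj : ∀ {a b : α}, F.Adj a b → G.Adj (toFun a) (toFun b)

/-- `G` contains a copy of `F` (i.e. a subgraph isomorphic to `F`). -/
def Contains {α : Type u} {β : Type v} (F : SimpleGraph α) (G : SimpleGraph β) : Prop :=
  Nonempty (GraphCopy F G)

/-- `G` contains `k` pairwise vertex-disjoint copies of `F`. -/
def HasDisjCopies {α : Type u} {β : Type v} (F : SimpleGraph α) (G : SimpleGraph β)
    (k : ℕ) : Prop :=
  ∃ c : Fin k → GraphCopy F G,
    ∀ i j : Fin k, i ≠ j → Disjoint (Set.range (c i).toFun) (Set.range (c j).toFun)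

/-- The join of two graphs: their disjoint union together with all cross edges. -/
def gJoin {α : Type u} {β : Type v} (G : SimpleGraph α) (H : SimpleGraph β) :
    SimpleGraph (α ⊕ β) where
  Adj x y :=
    match x, y with
    | Sum.inl a, Sum.inl b => G.Adj a b
    | Sum.inr a, Sum.inr b => H.Adj a b
    | _, _ => True
  symm := ⟨by rintro (a | a) (b | b) h <;> first | exact h.symm | trivial⟩
  loopless := ⟨by rintro (a | a) h; exacts [G.irrefl h, H.irrefl h]⟩

/-- The Turán number: maximum number of edges of an `n`-vertex `F`-free graph. -/
noncomputable def exNum {α : Type u} (n : ℕ) (F : SimpleGraph α) : ℕ :=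
  sSup {m : ℕ | ∃ G : SimpleGraph (Fin n), ¬ Contains F G ∧ m = G.edgeSet.ncard}

/-- The number of (unlabeled) copies of `H` in `G`, i.e. the number of subgraphs of `G`
isomorphic to `H`. -/
noncomputable def copyCount {α : Type u} {β : Type v} (H : SimpleGraph α)
    (G : SimpleGraph β) : ℕ :=
  {A : G.Subgraph | Nonempty (H ≃g A.coe)}.ncard

/-- The generalized Turán number: maximum number of copies of `H` in an
`n`-vertex `F`-free graph. -/
noncomputable def exGen {α : Type u} {γ : Type v} (n : ℕ) (H : SimpleGraph α)
    (F : SimpleGraph γ) : ℕ :=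
  sSup {m : ℕ | ∃ G : SimpleGraph (Fin n), ¬ Contains F G ∧ m = copyCount H G}

/-- `s` is a matching in `G`: a set of edges of `G`, pairwise vertex-disjoint. -/
def IsMatchingSet {V : Type u} (G : SimpleGraph V) (s : Finset (Sym2 V)) : Prop :=
  ↑s ⊆ G.edgeSet ∧ ∀ e ∈ s, ∀ f ∈ s, e ≠ f → ∀ x : V, x ∈ e → x ∉ f

/-- The number of matchings of size `l` in `G`. -/
noncomputable def matchCount {V : Type u} (G : SimpleGraph V) (l : ℕ) : ℕ :=
  {s : Finset (Sym2 V) | s.card = l ∧ IsMatchingSet G s}.ncard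

/-- `G` contains `k` pairwise vertex-disjoint triangles. -/
def HasDisjTriangles {V : Type u} (G : SimpleGraph V) (k : ℕ) : Prop :=
  ∃ S : Finset (Finset V), S.card = k ∧ (∀ T ∈ S, G.IsNClique 3 T) ∧
    (S : Set (Finset V)).Pairwise fun T T' => Disjoint T T'

/-- The number of copies of `lK₃` (families of `l` pairwise disjoint triangles) in `G`. -/
noncomputable def disjTriFamCount {V : Type u} (G : SimpleGraph V) (l : ℕ) : ℕ :=
  {S : Finset (Finset V) | S.card = l ∧ (∀ T ∈ S, G.IsNClique 3 T) ∧
    (S : Set (Finset V)).Pairwise fun T T' => Disjoint T T'}.ncard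

set_option linter.unusedSectionVars false

section MatchCountAux

open Finset

variable {V : Type*} [Fintype V] [DecidableEq V]

open Classical in
/-- tuples of length `l` of pairwise disjoint edges of `G` avoiding the vertex set `A`. -/
noncomputable def mtup (G : SimpleGraph V) (A : Finset V) (l : ℕ) :
    Finset (Fin l → Sym2 V) :=
  univ.filter (fun f => (∀ i, f i ∈ G.edgeSet) ∧ (∀ i, ∀ x ∈ f i, x ∉ A) ∧
    ∀ i j, i ≠ j → ∀ x ∈ f i, x ∉ f j)

lemma mem_mtup {G : SimpleGraph V} {A : Finset V} {l : ℕ} {f : Fin l → Sym2 V} :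
    f ∈ mtup G A l ↔ (∀ i, f i ∈ G.edgeSet) ∧ (∀ i, ∀ x ∈ f i, x ∉ A) ∧
      ∀ i j, i ≠ j → ∀ x ∈ f i, x ∉ f j := by
  classical
  simp [mtup]

open Classical in
/-- edges of `G` avoiding the vertex set `A`. -/
noncomputable def eAvoid (G : SimpleGraph V) (A : Finset V) : Finset (Sym2 V) :=
  univ.filter (fun e => e ∈ G.edgeSet ∧ ∀ x ∈ e, x ∉ A)

lemma mem_eAvoid {G : SimpleGraph V} {A : Finset V} {e : Sym2 V} :
    e ∈ eAvoid G A ↔ e ∈ G.edgeSet ∧ ∀ x ∈ e, x ∉ A := by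
  classical
  simp [eAvoid]

open Classical in
/-- the support of an edge, as a finset. -/
noncomputable def esupp (e : Sym2 V) : Finset V := univ.filter (· ∈ e)

lemma mem_esupp {e : Sym2 V} {x : V} : x ∈ esupp e ↔ x ∈ e := by
  classical
  simp [esupp]

lemma esupp_card {e : Sym2 V} (he : ¬ e.IsDiag) : (esupp e).card = 2 := by
  induction e using Sym2.ind with
  | _ a b =>
    have hab : a ≠ b := by simpa using he
    have : esupp s(a, b) = {a, b} := by
      ext x; simp [mem_esupp, Sym2.mem_iff]
    rw [this, card_pair hab]

lemma card_union_esupp {G : SimpleGraph V} {A : Finset V} {e : Sym2 V} (he : e ∈ eAvoid G A) :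
    (A ∪ esupp e).card = A.card + 2 := by
  obtain ⟨he1, he2⟩ := mem_eAvoid.1 he
  rw [card_union_of_disjoint, esupp_card (G.not_isDiag_of_mem_edgeSet he1)]
  exact Finset.disjoint_right.2 fun x hx hxA => he2 x (mem_esupp.1 hx) hxA

lemma mtup_succ_card (G : SimpleGraph V) (A : Finset V) (l : ℕ) :
    (mtup G A (l + 1)).card = ∑ e ∈ eAvoid G A, (mtup G (A ∪ esupp e) l).card := by
  rw [card_eq_sum_card_fiberwise (f := fun f => f 0) (t := eAvoid G A) ?h]
  case h =>
    intro f hf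
    obtain ⟨h1, h2, _⟩ := mem_mtup.1 hf
    exact mem_eAvoid.2 ⟨h1 0, h2 0⟩
  refine Finset.sum_congr rfl fun e he => ?_
  refine Finset.card_bij' (fun f _ => Fin.tail f) (fun g _ => Fin.cons e g) ?_ ?_ ?_ ?_
  · intro f hf
    rw [mem_filter] at hf
    obtain ⟨hf, hf0⟩ := hf
    obtain ⟨h1, h2, h3⟩ := mem_mtup.1 hf
    refine mem_mtup.2 ⟨fun i => h1 i.succ, fun i x hx => ?_, fun i j hij x hx => ?_⟩
    · rw [Finset.mem_union]
      push_neg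
      refine ⟨h2 i.succ x hx, fun hxe => ?_⟩
      exact h3 i.succ 0 (Fin.succ_ne_zero i) x hx (hf0 ▸ mem_esupp.1 hxe)
    · exact h3 i.succ j.succ (fun hc => hij (Fin.succ_injective _ hc)) x hx
  · intro g hg
    obtain ⟨h1, h2, h3⟩ := mem_mtup.1 hg
    obtain ⟨he1, he2⟩ := mem_eAvoid.1 he
    rw [mem_filter]
    refine ⟨mem_mtup.2 ⟨?_, ?_, ?_⟩, rfl⟩
    · intro i
      induction i using Fin.cases with
      | zero => simpa using he1
      | succ i => simpa using h1 i
    · intro i x hx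
      induction i using Fin.cases with
      | zero => exact he2 x (by simpa using hx)
      | succ i =>
        have := h2 i x (by simpa using hx)
        rw [Finset.mem_union] at this
        push_neg at this
        exact this.1
    · intro i j hij x hx hx'
      induction i using Fin.cases with
      | zero =>
        induction j using Fin.cases with
        | zero => exact hij rfl
        | succ j =>
          have := h2 j x (by simpa using hx')
          rw [Finset.mem_union] at this
          push_neg at this
          exact this.2 (mem_esupp.2 (by simpa using hx))
      | succ i =>
        induction j using Fin.cases with
        | zero =>
          have := h2 i x (by simpa using hx)
          rw [Finset.mem_union] at this
          push_neg at this
          exact this.2 (mem_esupp.2 (by simpa using hx'))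
        | succ j =>
          exact h3 i j (fun hc => hij (by rw [hc])) x (by simpa using hx) (by simpa using hx')
  · intro f hf
    rw [mem_filter] at hf
    show Fin.cons e (Fin.tail f) = f
    rw [← hf.2]
    exact Fin.cons_self_tail f
  · intro g _
    funext i
    exact @Fin.cons_succ l (fun _ => Sym2 V) e g i

lemma card_range_odd (n : ℕ) : #((range n).filter (fun w => w % 2 = 1)) = n / 2 := by
  induction n with
  | zero => simp
  | succ n ih =>
    rw [range_add_one, filter_insert]
    by_cases h : n % 2 = 1
    · rw [if_pos h, card_insert_of_notMem (fun hc => notMem_range_self (mem_filter.1 hc).1), ih]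
      omega
    · rw [if_neg h, ih]
      omega

lemma card_fin_odd (n : ℕ) : #(univ.filter (fun w : Fin n => (w : ℕ) % 2 = 1)) = n / 2 := by
  rw [← card_range_odd n]
  refine card_bij (fun w _ => (w : ℕ)) ?_ ?_ ?_
  · intro a ha
    simp only [mem_filter, mem_range]
    exact ⟨a.isLt, (mem_filter.1 ha).2⟩
  · intro a _ b _ h
    exact Fin.val_injective h
  · intro b hb
    rw [mem_filter, mem_range] at hb
    exact ⟨⟨b, hb.1⟩, by simp [hb.2], rfl⟩

lemma half_mul (m : ℕ) : m / 2 * (m - m / 2) = m ^ 2 / 4 := by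
  rcases Nat.even_or_odd m with ⟨k, hk⟩ | ⟨k, hk⟩
  · subst hk
    have h2 : (k + k) / 2 = k := by omega
    have h3 : k + k - k = k := by omega
    have h1 : (k + k) ^ 2 / 4 = k * k := by
      have h4 : (k + k) ^ 2 = k * k * 4 := by ring
      rw [h4, Nat.mul_div_cancel _ (by norm_num)]
    rw [h2, h3, h1]
  · subst hk
    have h1 : (2 * k + 1) ^ 2 = 4 * (k * (k + 1)) + 1 := by ring
    have h2 : (2 * k + 1) / 2 = k := by omega
    rw [h1, h2]
    have h3 : (4 * (k * (k + 1)) + 1) / 4 = k * (k + 1) := by omega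
    rw [h3]
    have : 2 * k + 1 - k = k + 1 := by omega
    rw [this]

lemma turan2_card (n : ℕ) : #(turanGraph n 2).edgeFinset = n / 2 * (n - n / 2) := by
  have hdeg : ∀ v : Fin n, (turanGraph n 2).degree v =
      if (v : ℕ) % 2 = 1 then n - n / 2 else n / 2 := by
    intro v
    rw [degree, neighborFinset_eq_filter]
    by_cases h : (v : ℕ) % 2 = 1
    · rw [if_pos h]
      have : univ.filter ((turanGraph n 2).Adj v) = univ.filter (fun w : Fin n => ¬ ((w : ℕ) % 2 = 1)) := by
        refine filter_congr fun w _ => ?_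
        show ((v : ℕ) % 2 ≠ (w : ℕ) % 2) ↔ _
        omega
      rw [this, filter_not, card_sdiff_of_subset (filter_subset _ _), card_univ, Fintype.card_fin,
        card_fin_odd]
    · rw [if_neg h]
      have : univ.filter ((turanGraph n 2).Adj v) = univ.filter (fun w : Fin n => (w : ℕ) % 2 = 1) := by
        refine filter_congr fun w _ => ?_
        show ((v : ℕ) % 2 ≠ (w : ℕ) % 2) ↔ _
        omega
      rw [this, card_fin_odd]
  have hsum := sum_degrees_eq_twice_card_edges (turanGraph n 2)
  rw [Finset.sum_congr rfl (fun v _ => hdeg v)] at hsum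
  rw [Finset.sum_ite, Finset.sum_const, Finset.sum_const, smul_eq_mul, smul_eq_mul,
    card_fin_odd, filter_not, card_sdiff_of_subset (filter_subset _ _), card_univ, Fintype.card_fin,
    card_fin_odd] at hsum
  have key := Nat.mul_comm (n - n / 2) (n / 2)
  omega

lemma mantel {V : Type*} [Fintype V] [DecidableEq V] (H : SimpleGraph V) [DecidableRel H.Adj]
    (h : H.CliqueFree 3) : #H.edgeFinset ≤ (Fintype.card V) ^ 2 / 4 := by
  obtain ⟨G, hdec, hG⟩ := exists_isTuranMaximal (V := V) (r := 2) (by norm_num)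
  have h1 := hG.2 h
  obtain ⟨f⟩ := hG.nonempty_iso_turanGraph
  calc #H.edgeFinset ≤ #G.edgeFinset := h1
    _ = #(turanGraph (Fintype.card V) 2).edgeFinset := Iso.card_edgeFinset_eq f
    _ = (Fintype.card V) / 2 * (Fintype.card V - Fintype.card V / 2) := turan2_card _
    _ = (Fintype.card V) ^ 2 / 4 := half_mul _

lemma eAvoid_card_le (G : SimpleGraph V) (h : G.CliqueFree 3) (A : Finset V) :
    (eAvoid G A).card ≤ (Fintype.card V - A.card) ^ 2 / 4 := by
  classical
  set s : Set V := ↑(Aᶜ) with hs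
  have hmem : ∀ x : V, x ∈ s ↔ x ∉ A := by intro x; simp [hs]
  set H := G.induce s with hH
  have hHfree : H.CliqueFree 3 := h.comap (Embedding.induce s).isContained
  have hcard : Fintype.card s = Fintype.card V - A.card := by
    have h1 : Fintype.card s = #(Aᶜ) := by
      rw [← Fintype.card_coe (Aᶜ)]
      exact Fintype.card_congr (Equiv.subtypeEquivRight (fun x => by simp [hs]))
    rw [h1, Finset.card_compl]
  have hsub : eAvoid G A ⊆ H.edgeFinset.image (Sym2.map Subtype.val) := by
    intro e he
    rw [mem_eAvoid] at he
    obtain ⟨he1, he2⟩ := he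
    induction e using Sym2.ind with
    | _ a b =>
      have ha : a ∈ s := (hmem a).2 (he2 a (Sym2.mem_mk_left a b))
      have hb : b ∈ s := (hmem b).2 (he2 b (Sym2.mem_mk_right a b))
      rw [Finset.mem_image]
      refine ⟨s(⟨a, ha⟩, ⟨b, hb⟩), ?_, by simp⟩
      rw [mem_edgeFinset, mem_edgeSet]
      exact he1
  calc (eAvoid G A).card ≤ #(H.edgeFinset.image (Sym2.map Subtype.val)) := card_le_card hsub
    _ ≤ #H.edgeFinset := card_image_le
    _ ≤ (Fintype.card s) ^ 2 / 4 := mantel H hHfree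
    _ = (Fintype.card V - A.card) ^ 2 / 4 := by rw [hcard]

lemma mtup_zero_card (G : SimpleGraph V) (A : Finset V) : (mtup G A 0).card = 1 := by
  have h1 : (mtup G A 0) = {fun i => i.elim0} := by
    ext f
    simp only [Finset.mem_singleton]
    constructor
    · intro _; funext i; exact i.elim0
    · intro hf
      exact mem_mtup.2 ⟨fun i => i.elim0, fun i => i.elim0, fun i => i.elim0⟩
  rw [h1, card_singleton]

/-- Upper bound: ordered tuples of disjoint edges in a triangle-free graph. -/
lemma mtup_card_le (G : SimpleGraph V) (h : G.CliqueFree 3) :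
    ∀ (l : ℕ) (A : Finset V),
      (mtup G A l).card ≤ ∏ i ∈ range l, ((Fintype.card V - A.card) - 2 * i) ^ 2 / 4 := by
  intro l
  induction l with
  | zero => intro A; simp [mtup_zero_card]
  | succ l ih =>
    intro A
    rw [mtup_succ_card]
    have hbound : ∀ e ∈ eAvoid G A, (mtup G (A ∪ esupp e) l).card ≤
        ∏ i ∈ range l, ((Fintype.card V - A.card) - 2 * (i + 1)) ^ 2 / 4 := by
      intro e he
      refine (ih (A ∪ esupp e)).trans (le_of_eq (Finset.prod_congr rfl fun i _ => ?_))
      rw [card_union_esupp he]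
      congr 2
      omega
    calc ∑ e ∈ eAvoid G A, (mtup G (A ∪ esupp e) l).card
        ≤ ∑ _e ∈ eAvoid G A, ∏ i ∈ range l, ((Fintype.card V - A.card) - 2 * (i + 1)) ^ 2 / 4 :=
          Finset.sum_le_sum hbound
      _ = (eAvoid G A).card * ∏ i ∈ range l, ((Fintype.card V - A.card) - 2 * (i + 1)) ^ 2 / 4 := by
          rw [Finset.sum_const, smul_eq_mul]
      _ ≤ ((Fintype.card V - A.card) ^ 2 / 4) *
            ∏ i ∈ range l, ((Fintype.card V - A.card) - 2 * (i + 1)) ^ 2 / 4 :=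
          Nat.mul_le_mul_right _ (eAvoid_card_le G h A)
      _ = ∏ i ∈ range (l + 1), ((Fintype.card V - A.card) - 2 * i) ^ 2 / 4 := by
          rw [Finset.prod_range_succ']
          simp only [mul_zero, Nat.sub_zero]
          exact mul_comm _ _

/-- Lower bound: ordered tuples of disjoint edges containing a "bipartite-like" structure. -/
lemma mtup_card_ge {a b : ℕ} (G : SimpleGraph V) (f : Fin a → V) (g : Fin b → V)
    (hf : Function.Injective f) (hg : Function.Injective g)
    (hfg : ∀ x y, f x ≠ g y) (hadj : ∀ x y, G.Adj (f x) (g y)) :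
    ∀ (l : ℕ) (L : Finset (Fin a)) (R : Finset (Fin b)),
      ∏ i ∈ range l, ((a - L.card - i) * (b - R.card - i)) ≤
        (mtup G (L.image f ∪ R.image g) l).card := by
  intro l
  induction l with
  | zero =>
    intro L R
    simpa using Finset.card_pos.2 ⟨fun i => i.elim0,
      mem_mtup.2 ⟨fun i => i.elim0, fun i => i.elim0, fun i => i.elim0⟩⟩
  | succ l ih =>
    intro L R
    rw [mtup_succ_card]
    set A := L.image f ∪ R.image g with hA
    set S : Finset (Sym2 V) := (Lᶜ ×ˢ Rᶜ).image (fun p => s(f p.1, g p.2)) with hS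
    have hSsub : S ⊆ eAvoid G A := by
      intro e he
      rw [hS, Finset.mem_image] at he
      obtain ⟨⟨x, y⟩, hxy, rfl⟩ := he
      rw [Finset.mem_product, Finset.mem_compl, Finset.mem_compl] at hxy
      refine mem_eAvoid.2 ⟨(G.mem_edgeSet).2 (hadj x y), ?_⟩
      intro z hz
      rw [Sym2.mem_iff] at hz
      rw [hA, Finset.mem_union]
      push_neg
      rcases hz with rfl | rfl
      · constructor
        · intro hc
          obtain ⟨x', hx', hx'e⟩ := Finset.mem_image.1 hc
          exact hxy.1 (hf hx'e ▸ hx')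
        · intro hc
          obtain ⟨y', _, hy'e⟩ := Finset.mem_image.1 hc
          exact hfg x y' hy'e.symm
      · constructor
        · intro hc
          obtain ⟨x', _, hx'e⟩ := Finset.mem_image.1 hc
          exact hfg x' y hx'e
        · intro hc
          obtain ⟨y', hy', hy'e⟩ := Finset.mem_image.1 hc
          exact hxy.2 (hg hy'e ▸ hy')
    have hScard : S.card = (a - L.card) * (b - R.card) := by
      rw [hS, Finset.card_image_of_injOn, Finset.card_product, Finset.card_compl,
        Finset.card_compl, Fintype.card_fin, Fintype.card_fin]
      intro p _ q _ hpq
      rw [Sym2.eq_iff] at hpq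
      rcases hpq with ⟨h1, h2⟩ | ⟨h1, h2⟩
      · exact Prod.ext (hf h1) (hg h2)
      · exact absurd h1 (hfg _ _)
    have hterm : ∀ e ∈ S, ∏ i ∈ range l, ((a - L.card - (i + 1)) * (b - R.card - (i + 1))) ≤
        (mtup G (A ∪ esupp e) l).card := by
      intro e he
      rw [hS, Finset.mem_image] at he
      obtain ⟨⟨x, y⟩, hxy, rfl⟩ := he
      rw [Finset.mem_product, Finset.mem_compl, Finset.mem_compl] at hxy
      have hA' : A ∪ esupp s(f x, g y) = (insert x L).image f ∪ (insert y R).image g := by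
        ext z
        simp only [hA, Finset.mem_union, mem_esupp, Sym2.mem_iff, Finset.mem_image,
          Finset.mem_insert]
        constructor
        · rintro ((⟨x', hx', rfl⟩ | ⟨y', hy', rfl⟩) | (rfl | rfl))
          · exact Or.inl ⟨x', Or.inr hx', rfl⟩
          · exact Or.inr ⟨y', Or.inr hy', rfl⟩
          · exact Or.inl ⟨x, Or.inl rfl, rfl⟩
          · exact Or.inr ⟨y, Or.inl rfl, rfl⟩
        · rintro (⟨x', (rfl | hx'), rfl⟩ | ⟨y', (rfl | hy'), rfl⟩)
          · exact Or.inr (Or.inl rfl)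
          · exact Or.inl (Or.inl ⟨x', hx', rfl⟩)
          · exact Or.inr (Or.inr rfl)
          · exact Or.inl (Or.inr ⟨y', hy', rfl⟩)
      rw [hA']
      have h1 := ih (insert x L) (insert y R)
      rw [Finset.card_insert_of_notMem hxy.1, Finset.card_insert_of_notMem hxy.2] at h1
      refine le_trans (le_of_eq (Finset.prod_congr rfl fun i _ => ?_)) h1
      congr 1 <;> omega
    calc ∏ i ∈ range (l + 1), ((a - L.card - i) * (b - R.card - i))
        = ((a - L.card) * (b - R.card)) *
            ∏ i ∈ range l, ((a - L.card - (i + 1)) * (b - R.card - (i + 1))) := by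
          rw [Finset.prod_range_succ']
          simp only [Nat.sub_zero]
          exact mul_comm _ _
      _ = ∑ _e ∈ S, ∏ i ∈ range l, ((a - L.card - (i + 1)) * (b - R.card - (i + 1))) := by
          rw [Finset.sum_const, smul_eq_mul, hScard]
      _ ≤ ∑ e ∈ S, (mtup G (A ∪ esupp e) l).card := Finset.sum_le_sum hterm
      _ ≤ ∑ e ∈ eAvoid G A, (mtup G (A ∪ esupp e) l).card :=
          Finset.sum_le_sum_of_subset hSsub

lemma sym2_exists_mem (e : Sym2 V) : ∃ x, x ∈ e :=
  Sym2.ind (fun a b => ⟨a, Sym2.mem_mk_left a b⟩) e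

lemma mtup_inj {G : SimpleGraph V} {l : ℕ} {f : Fin l → Sym2 V}
    (hf : f ∈ mtup G ∅ l) : Function.Injective f := by
  obtain ⟨_, _, h3⟩ := mem_mtup.1 hf
  intro i j hij
  by_contra hne
  obtain ⟨x, hx⟩ := sym2_exists_mem (f i)
  exact h3 i j hne x hx (hij ▸ hx)

open Classical in
noncomputable def mset (G : SimpleGraph V) (l : ℕ) : Finset (Finset (Sym2 V)) :=
  univ.filter (fun s => s.card = l ∧ IsMatchingSet G s)

lemma mem_mset {G : SimpleGraph V} {l : ℕ} {s : Finset (Sym2 V)} :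
    s ∈ mset G l ↔ s.card = l ∧ IsMatchingSet G s := by
  classical
  simp [mset]

lemma matchCount_eq_mset_card (G : SimpleGraph V) (l : ℕ) :
    matchCount G l = (mset G l).card := by
  rw [matchCount, ← Set.ncard_coe_finset]
  congr 1
  ext s
  simp [mem_mset]

lemma mtup_card_eq (G : SimpleGraph V) (l : ℕ) :
    (mtup G ∅ l).card = matchCount G l * l.factorial := by
  classical
  rw [matchCount_eq_mset_card]
  rw [card_eq_sum_card_fiberwise (f := fun f => Finset.image f univ) (t := mset G l) ?ht]
  case ht =>
    intro f hf
    obtain ⟨h1, _, h3⟩ := mem_mtup.1 hf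
    refine mem_mset.2 ⟨?_, ?_, ?_⟩
    · rw [Finset.card_image_of_injective _ (mtup_inj hf), card_univ, Fintype.card_fin]
    · intro e he
      obtain ⟨i, _, rfl⟩ := Finset.mem_image.1 he
      exact h1 i
    · intro e he e' he' hne x hx
      obtain ⟨i, _, rfl⟩ := Finset.mem_image.1 he
      obtain ⟨j, _, rfl⟩ := Finset.mem_image.1 he'
      exact h3 i j (fun hc => hne (by rw [hc])) x hx
  have hfib : ∀ s ∈ mset G l,
      #(filter (fun f => Finset.image f univ = s) (mtup G ∅ l)) = l.factorial := by
    intro s hs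
    obtain ⟨hcard, hsub, hdisj⟩ := mem_mset.1 hs
    have hscard : Fintype.card ↥s = l := by rw [Fintype.card_coe, hcard]
    set Φ : (Fin l ≃ ↥s) → (Fin l → Sym2 V) := fun σ => fun i => ((σ i : Sym2 V)) with hΦ
    have hΦinj : Function.Injective Φ := by
      intro σ τ h
      apply Equiv.ext
      intro i
      exact Subtype.ext (congrFun h i)
    have himg : filter (fun f => Finset.image f univ = s) (mtup G ∅ l) =
        Finset.image Φ univ := by
      ext f
      rw [mem_filter, Finset.mem_image]
      constructor
      · rintro ⟨hf, hfs⟩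
        have hmem : ∀ i : Fin l, f i ∈ s := by
          intro i
          rw [← hfs]
          exact Finset.mem_image_of_mem f (mem_univ i)
        set f' : Fin l → ↥s := fun i => ⟨f i, hmem i⟩ with hf'
        have hinj' : Function.Injective f' := fun i j hij =>
          mtup_inj hf (congrArg Subtype.val hij)
        have hbij : Function.Bijective f' :=
          (Fintype.bijective_iff_injective_and_card f').2
            ⟨hinj', by rw [Fintype.card_fin, hscard]⟩
        exact ⟨Equiv.ofBijective f' hbij, mem_univ _, rfl⟩
      · rintro ⟨σ, _, rfl⟩
        have hval : ∀ i, (σ i : Sym2 V) ∈ s := fun i => (σ i).2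
        refine ⟨mem_mtup.2 ⟨fun i => hsub (hval i), fun i x _ => Finset.notMem_empty x,
          fun i j hij x hx => ?_⟩, ?_⟩
        · refine hdisj _ (hval i) _ (hval j) (fun hc => hij (σ.injective (Subtype.ext hc))) x hx
        · ext e
          rw [Finset.mem_image]
          constructor
          · rintro ⟨i, _, rfl⟩
            exact hval i
          · intro hes
            exact ⟨σ.symm ⟨e, hes⟩, mem_univ _, by simp [hΦ]⟩
    rw [himg, Finset.card_image_of_injective _ hΦinj, card_univ,
      Fintype.card_equiv (Fintype.equivFinOfCardEq hscard).symm, Fintype.card_fin]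

  rw [Finset.sum_congr rfl hfib, Finset.sum_const, smul_eq_mul]
end MatchCountAux

lemma prod_floor_eq (n l : ℕ) (hn : 2 * l ≤ n) :
    ∏ i ∈ Finset.range l, (n - 2 * i) ^ 2 / 4 =
      ∏ i ∈ Finset.range l, ((n / 2 - i) * ((n - n / 2) - i)) := by
  refine Finset.prod_congr rfl fun i hi => ?_
  rw [Finset.mem_range] at hi
  have h2i : 2 * i ≤ n := by omega
  have h1 : n / 2 - i = (n - 2 * i) / 2 := by omega
  have h2 : (n - n / 2) - i = (n - 2 * i) - (n - 2 * i) / 2 := by omega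
  rw [h1, h2, half_mul]

/-- a "balanced bipartite" graph on `Fin n`. -/
def fbip (n : ℕ) : SimpleGraph (Fin n) where
  Adj x y := ((x : ℕ) < n / 2 ∧ n / 2 ≤ (y : ℕ)) ∨ ((y : ℕ) < n / 2 ∧ n / 2 ≤ (x : ℕ))
  symm := ⟨by intro x y h; tauto⟩
  loopless := ⟨by intro x h; omega⟩

lemma fbip_cliqueFree (n : ℕ) : (fbip n).CliqueFree 3 := by
  intro t ht
  obtain ⟨x, y, z, hxy, hxz, hyz, hteq⟩ := Finset.card_eq_three.1 ht.2
  have hadj : ∀ u v : Fin n, (fbip n).Adj u v → (((u : ℕ) < n / 2) ↔ ¬ ((v : ℕ) < n / 2)) := by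
    intro u v h
    rcases h with ⟨h1, h2⟩ | ⟨h1, h2⟩ <;> constructor <;> intro <;> omega
  have h1 := hadj x y (ht.1 (by simp [hteq]) (by simp [hteq]) hxy)
  have h2 := hadj x z (ht.1 (by simp [hteq]) (by simp [hteq]) hxz)
  have h3 := hadj y z (ht.1 (by simp [hteq]) (by simp [hteq]) hyz)
  tauto


/-- The balanced complete bipartite graph attains
`(1/l!) ∏_{i<l} ⌊(n-2i)²/4⌋` matchings of size `l`, and this is the maximum over all
triangle-free graphs on `n` vertices. -/
theorem stmt4 (n l : ℕ) (hn : 2 * l ≤ n) :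
    (∏ i ∈ Finset.range l, (n - 2 * i) ^ 2 / 4) ≤
      matchCount (completeBipartiteGraph (Fin (n / 2)) (Fin (n - n / 2))) l * l.factorial
    ∧ ∃ M : ℕ,
      IsGreatest {m : ℕ | ∃ G : SimpleGraph (Fin n), G.CliqueFree 3 ∧ m = matchCount G l} M
      ∧ M * l.factorial = ∏ i ∈ Finset.range l, (n - 2 * i) ^ 2 / 4 := by
  have key : ∀ (W : Type) (_ : Fintype W) (_ : DecidableEq W) (G : SimpleGraph W)
      (f : Fin (n / 2) → W) (g : Fin (n - n / 2) → W),
      Function.Injective f → Function.Injective g → (∀ x y, f x ≠ g y) →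
      (∀ x y, G.Adj (f x) (g y)) →
      (∏ i ∈ Finset.range l, (n - 2 * i) ^ 2 / 4) ≤ matchCount G l * l.factorial := by
    intro W _ _ G f g hf hg hfg hadj
    have h1 := mtup_card_ge G f g hf hg hfg hadj l ∅ ∅
    rw [Finset.image_empty, Finset.image_empty, Finset.empty_union] at h1
    simp only [Finset.card_empty, Nat.sub_zero] at h1
    rw [mtup_card_eq] at h1
    exact le_trans (le_of_eq (prod_floor_eq n l hn)) h1
  constructor
  · refine key _ inferInstance inferInstance _ Sum.inl Sum.inr
      Sum.inl_injective Sum.inr_injective (fun x y => Sum.inl_ne_inr) (fun x y => ?_)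
    simp [completeBipartiteGraph]
  · refine ⟨matchCount (fbip n) l, ⟨⟨fbip n, fbip_cliqueFree n, rfl⟩, ?_⟩, ?_⟩
    · -- upper bound
      rintro m ⟨G, hG, rfl⟩
      have hup := mtup_card_le G hG l ∅
      rw [mtup_card_eq, Finset.card_empty, Fintype.card_fin] at hup
      have hlow : (∏ i ∈ Finset.range l, (n - 2 * i) ^ 2 / 4) ≤
          matchCount (fbip n) l * l.factorial := by
        refine key _ inferInstance inferInstance (fbip n)
          (fun i => ⟨(i : ℕ), by omega⟩) (fun j => ⟨n / 2 + (j : ℕ), by omega⟩)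
          ?_ ?_ ?_ ?_
        · intro i j h; exact Fin.ext (by simpa using congrArg Fin.val h)
        · intro i j h; exact Fin.ext (by simpa using congrArg Fin.val h)
        · intro i j h
          have := congrArg Fin.val h
          simp at this
          omega
        · intro i j
          left
          exact ⟨by simpa using i.isLt, by simp⟩
      have : matchCount G l * l.factorial ≤ matchCount (fbip n) l * l.factorial := by
        refine hup.trans ?_
        refine le_trans (le_of_eq (Finset.prod_congr rfl fun i _ => ?_)) hlow
        rw [Nat.sub_zero]
      exact Nat.le_of_mul_le_mul_right this l.factorial_pos
    · -- exact value
      have hup := mtup_card_le (fbip n) (fbip_cliqueFree n) l ∅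
      rw [mtup_card_eq, Finset.card_empty, Fintype.card_fin] at hup
      have hlow : (∏ i ∈ Finset.range l, (n - 2 * i) ^ 2 / 4) ≤
          matchCount (fbip n) l * l.factorial := by
        refine key _ inferInstance inferInstance (fbip n)
          (fun i => ⟨(i : ℕ), by omega⟩) (fun j => ⟨n / 2 + (j : ℕ), by omega⟩)
          ?_ ?_ ?_ ?_
        · intro i j h; exact Fin.ext (by simpa using congrArg Fin.val h)
        · intro i j h; exact Fin.ext (by simpa using congrArg Fin.val h)
        · intro i j h
          have := congrArg Fin.val h
          simp at this
          omega
        · intro i j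
          left
          exact ⟨by simpa using i.isLt, by simp⟩
      refine le_antisymm ?_ hlow
      refine hup.trans (le_of_eq (Finset.prod_congr rfl fun i _ => ?_))
      rw [Nat.sub_zero]
end

section
/- Let s ≥ t ≥ 2 and k ≥ 2 be integers and set x = ⌈(kt - s)/(k - 1)⌉ - 1, and assume x ≥ 1 and n ≥ s. Then the graph K_{s-x} + T_x(n - s + x), the join of a clique on s - x vertices with the x-partite Turán graph on n - s + x vertices, contains no k pairwise vertex-disjoint copies of K_t, and it contains at least ⌊(n - s + x)/x⌋^x copies of K_s. -/
open SimpleGraph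

universe u v

lemma key_arith (s t k x : ℕ) (hst : t ≤ s) (ht : 2 ≤ t) (hk : 2 ≤ k)
    (hx : x = (k * t - s + k - 2) / (k - 1) - 1) (hx1 : 1 ≤ x) :
    s + (k - 1) * x < k * t ∧ x < t := by
  have hb : 0 < k - 1 := by omega
  have hd : 2 ≤ (k * t - s + k - 2) / (k - 1) := by omega
  have h2 : 2 * (k - 1) ≤ k * t - s + k - 2 := (Nat.le_div_iff_mul_le hb).mp hd
  have h1 : (k * t - s + k - 2) / (k - 1) * (k - 1) ≤ k * t - s + k - 2 :=
    Nat.div_mul_le_self _ _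
  have hd' : (k * t - s + k - 2) / (k - 1) = x + 1 := by omega
  rw [hd'] at h1
  have hexp : (x + 1) * (k - 1) = x * (k - 1) + (k - 1) := by ring
  rw [hexp] at h1
  have hcomm : (k - 1) * x = x * (k - 1) := mul_comm _ _
  have hmain : s + (k - 1) * x < k * t := by omega
  refine ⟨hmain, ?_⟩
  by_contra hxt
  push_neg at hxt
  have h3 : (k - 1) * t ≤ (k - 1) * x := Nat.mul_le_mul_left _ hxt
  have h4 : (k - 1) * t = k * t - t := Nat.sub_one_mul k t
  omega

lemma part1 (s t k m x : ℕ) (hkey : s + (k - 1) * x < k * t) (hxt : x < t) (hxs : x ≤ s)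
    (hk : 1 ≤ k) (hx0 : 1 ≤ x) :
    ¬ HasDisjCopies (⊤ : SimpleGraph (Fin t))
        (gJoin (⊤ : SimpleGraph (Fin (s - x))) (turanGraph m x)) k := by
  classical
  rintro ⟨c, hdisj⟩
  -- images
  set F : Fin k → Finset (Fin (s - x) ⊕ Fin m) :=
    fun i => Finset.univ.image (c i).toFun with hF
  have hFcard : ∀ i, (F i).card = t := by
    intro i
    rw [hF]
    rw [Finset.card_image_of_injective _ (c i).inj, Finset.card_univ, Fintype.card_fin]
  -- right parts small
  have hR : ∀ i, (F i).toRight.card ≤ x := by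
    intro i
    have : (F i).toRight.card ≤ (Finset.range x).card := by
      apply Finset.card_le_card_of_injOn (fun v : Fin m => (v : ℕ) % x)
      · intro v hv
        simp only [Finset.mem_range]
        exact Finset.mem_coe.2 (Finset.mem_range.2 (Nat.mod_lt _ (show 0 < x by omega)))
      · intro v hv w hw hvw
        by_contra hne
        rw [Finset.mem_coe, Finset.mem_toRight, hF] at hv hw
        simp only [Finset.mem_image, Finset.mem_univ, true_and] at hv hw
        obtain ⟨a, ha⟩ := hv
        obtain ⟨b, hb⟩ := hw
        have hab : a ≠ b := by
          intro h; apply hne; rw [h] at ha; rw [ha] at hb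
          exact Sum.inr.inj hb
        have hadj : (gJoin (⊤ : SimpleGraph (Fin (s - x))) (turanGraph m x)).Adj
            (Sum.inr v) (Sum.inr w) := by
          rw [← ha, ← hb]
          exact (c i).adj (by simp [hab])
        have : (turanGraph m x).Adj v w := hadj
        rw [turanGraph] at this
        exact this hvw
      done
    simpa using this
  have hL : ∀ i, t - x ≤ (F i).toLeft.card := by
    intro i
    have := Finset.card_toLeft_add_card_toRight (u := F i)
    rw [hFcard i] at this
    have := hR i
    omega
  -- disjointness of left parts
  have hLd : ∀ i j : Fin k, i ≠ j → Disjoint (F i).toLeft (F j).toLeft := by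
    intro i j hij
    rw [Finset.disjoint_left]
    intro a hai haj
    rw [Finset.mem_toLeft, hF] at hai haj
    simp only [Finset.mem_image, Finset.mem_univ, true_and] at hai haj
    obtain ⟨u, hu⟩ := hai
    obtain ⟨w, hw⟩ := haj
    have h1 : (Sum.inl a : Fin (s - x) ⊕ Fin m) ∈ Set.range (c i).toFun := ⟨u, hu⟩
    have h2 : (Sum.inl a : Fin (s - x) ⊕ Fin m) ∈ Set.range (c j).toFun := ⟨w, hw⟩
    exact Set.disjoint_left.mp (hdisj i j hij) h1 h2
  -- sum bound
  have hsum : (Finset.univ : Finset (Fin k)).sum (fun i => (F i).toLeft.card) ≤ s - x := by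
    rw [← Finset.card_biUnion (fun i _ j _ hij => hLd i j hij)]
    have := Finset.card_le_univ ((Finset.univ : Finset (Fin k)).biUnion fun i => (F i).toLeft)
    simpa using this
  have hsum2 : k * (t - x) ≤ (Finset.univ : Finset (Fin k)).sum (fun i => (F i).toLeft.card) := by
    calc k * (t - x) = (Finset.univ : Finset (Fin k)).sum (fun _ => t - x) := by
          simp [Finset.sum_const, mul_comm]
      _ ≤ _ := Finset.sum_le_sum (fun i _ => hL i)
  have hC : k * (t - x) ≤ s - x := le_trans hsum2 hsum
  -- final arithmetic
  have e1 : k * (t - x) + k * x = k * t := by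
    rw [← Nat.mul_add]
    congr 1
    omega
  have e2 : (k - 1) * x + x = k * x := by
    have : (k - 1) * x + 1 * x = ((k - 1) + 1) * x := (add_mul _ _ _).symm
    rw [one_mul] at this
    rw [this]
    congr 1
    omega
  omega

lemma part2 (s m x : ℕ) (hx0 : 1 ≤ x) (hxs : x ≤ s) :
    (m / x) ^ x ≤
      ((gJoin (⊤ : SimpleGraph (Fin (s - x))) (turanGraph m x)).cliqueSet s).ncard := by
  classical
  set q := m / x with hq
  have hqm : q * x ≤ m := Nat.div_mul_le_self m x
  -- the vertex in part r picked by g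
  have hvert : ∀ (g : Fin x → Fin q) (r : Fin x), (r : ℕ) + (g r : ℕ) * x < m := by
    intro g r
    have h2 : ((g r : ℕ) + 1) * x ≤ q * x := Nat.mul_le_mul_right x (g r).isLt
    have h4 : ((g r : ℕ) + 1) * x = (g r : ℕ) * x + x := by ring
    have h5 := r.isLt
    omega
  set vert : (Fin x → Fin q) → Fin x → Fin m :=
    fun g r => ⟨(r : ℕ) + (g r : ℕ) * x, hvert g r⟩ with hvertdef
  have hmod : ∀ (g : Fin x → Fin q) (r : Fin x), ((vert g r : ℕ)) % x = r := by
    intro g r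
    show ((r : ℕ) + (g r : ℕ) * x) % x = r
    rw [Nat.add_mul_mod_self_right, Nat.mod_eq_of_lt r.isLt]
  set f : (Fin x → Fin q) → Finset (Fin (s - x) ⊕ Fin m) :=
    fun g => (Finset.univ.image (Sum.inl : Fin (s - x) → Fin (s - x) ⊕ Fin m)) ∪
      (Finset.univ.image (fun r : Fin x => (Sum.inr (vert g r) : Fin (s - x) ⊕ Fin m))) with hf
  -- f g is an s-clique
  have hclique : ∀ g, f g ∈
      ((gJoin (⊤ : SimpleGraph (Fin (s - x))) (turanGraph m x)).cliqueSet s) := by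
    intro g
    rw [SimpleGraph.mem_cliqueSet_iff]
    constructor
    · -- IsClique
      intro a ha b hb hab
      simp only [hf, Finset.coe_union, Set.mem_union, Finset.coe_image, Set.mem_image,
        Finset.mem_coe, Finset.coe_univ, Set.image_univ, Set.mem_range] at ha hb
      obtain (⟨a', rfl⟩ | ⟨ra, rfl⟩) := ha <;> obtain (⟨b', rfl⟩ | ⟨rb, rfl⟩) := hb
      · exact fun h => hab (by rw [h])
      · trivial
      · trivial
      · show (turanGraph m x).Adj _ _
        have hrr : ra ≠ rb := fun h => hab (by rw [h])
        show ((vert g ra : ℕ)) % x ≠ ((vert g rb : ℕ)) % x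
        rw [hmod, hmod]
        exact fun h => hrr (Fin.val_injective h)
    · -- card
      rw [hf]
      rw [Finset.card_union_of_disjoint]
      · have c1 : (Finset.univ.image (Sum.inl : Fin (s - x) → Fin (s - x) ⊕ Fin m)).card
            = s - x := by
          rw [Finset.card_image_of_injective _ Sum.inl_injective, Finset.card_univ,
            Fintype.card_fin]
        have hinj : Function.Injective (fun r : Fin x => (Sum.inr (vert g r) :
            Fin (s - x) ⊕ Fin m)) := by
          intro r r' h
          simp only [Sum.inr.injEq] at h
          have := hmod g r
          rw [h, hmod g r'] at this
          exact Fin.val_injective this.symm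
        have c2 : (Finset.univ.image (fun r : Fin x => (Sum.inr (vert g r) :
            Fin (s - x) ⊕ Fin m))).card = x := by
          rw [Finset.card_image_of_injective _ hinj, Finset.card_univ, Fintype.card_fin]
        rw [c1, c2]
        omega
      · rw [Finset.disjoint_left]
        rintro a ha hb
        simp only [Finset.mem_image, Finset.mem_univ, true_and] at ha hb
        obtain ⟨a', rfl⟩ := ha
        obtain ⟨r, hr⟩ := hb
        simp at hr
  -- f injective
  have hfinj : Function.Injective f := by
    intro g g' h
    funext r
    by_contra hne
    have h1 : (Sum.inr (vert g r) : Fin (s - x) ⊕ Fin m) ∈ f g := by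
      rw [hf]
      apply Finset.mem_union_right
      exact Finset.mem_image_of_mem _ (Finset.mem_univ r)
    rw [h, hf] at h1
    rw [Finset.mem_union] at h1
    rcases h1 with h1 | h1
    · simp only [Finset.mem_image, Finset.mem_univ, true_and] at h1
      obtain ⟨a, ha⟩ := h1
      exact Sum.inl_ne_inr ha
    · simp only [Finset.mem_image, Finset.mem_univ, true_and] at h1
      obtain ⟨r', hr'⟩ := h1
      have hrv : vert g' r' = vert g r := Sum.inr.inj hr'
      have hm : (r' : ℕ) = (r : ℕ) := by
        have := hmod g' r'
        rw [hrv, hmod g r] at this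
        exact this.symm
      have hval : (r' : ℕ) + (g' r' : ℕ) * x = (r : ℕ) + (g r : ℕ) * x :=
        congrArg Fin.val hrv
      have : (g' r' : ℕ) = (g r : ℕ) := by
        have hx0' : 0 < x := hx0
        have := Nat.eq_of_mul_eq_mul_right hx0' (by omega :
          (g' r' : ℕ) * x = (g r : ℕ) * x)
        exact this
      apply hne
      have hr'r : r' = r := Fin.val_injective hm
      rw [hr'r] at this
      exact (Fin.val_injective this).symm
  -- conclude
  have hfin : ((gJoin (⊤ : SimpleGraph (Fin (s - x))) (turanGraph m x)).cliqueSet s).Finite :=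
    Set.toFinite _
  let f' : (Fin x → Fin q) →
      ((gJoin (⊤ : SimpleGraph (Fin (s - x))) (turanGraph m x)).cliqueSet s) :=
    fun g => ⟨f g, hclique g⟩
  have hf'inj : Function.Injective f' := fun g g' h => hfinj (congrArg Subtype.val h)
  have := Nat.card_le_card_of_injective f' hf'inj
  rw [Nat.card_eq_fintype_card] at this
  simp only [Fintype.card_fun, Fintype.card_fin] at this
  rwa [Nat.card_coe_set_eq] at this

/-- With `x = ⌈(kt-s)/(k-1)⌉ - 1`, the graph `K_{s-x} + T_x(n-s+x)` has
no `k` disjoint copies of `K_t` and contains at least `⌊(n-s+x)/x⌋^x` copies of `K_s`. -/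
theorem stmt9 (s t k n x : ℕ) (hst : t ≤ s) (ht : 2 ≤ t) (hk : 2 ≤ k)
    (hx : x = (k * t - s + k - 2) / (k - 1) - 1) (hx1 : 1 ≤ x) (hn : s ≤ n) :
    ¬ HasDisjCopies (⊤ : SimpleGraph (Fin t))
        (gJoin (⊤ : SimpleGraph (Fin (s - x))) (turanGraph (n - s + x) x)) k
    ∧ ((n - s + x) / x) ^ x ≤
        ((gJoin (⊤ : SimpleGraph (Fin (s - x)))
          (turanGraph (n - s + x) x)).cliqueSet s).ncard := by
  obtain ⟨h1, h2⟩ := key_arith s t k x hst ht hk hx hx1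
  have hxs : x ≤ s := le_trans h2.le hst
  exact ⟨part1 s t k (n - s + x) x h1 h2 hxs (by omega) hx1,
    part2 s (n - s + x) x hx1 hxs⟩
end

section
/- Let 1 ≤ a ≤ b ≤ t and s ≤ a with s ≤ t. Then every K_{s,t}-free graph G on n vertices contains at most C(n, s) · C(t-1, a) · C(t-1, b-s) copies of K_{a,b} (where C(·,·) denotes binomial coefficients). In particular the number of copies of K_{a,b} is O(n^s). -/
open SimpleGraph

universe u v

open Finset in
open scoped Classical in
noncomputable def cN {n : ℕ} (G : SimpleGraph (Fin n)) (S : Finset (Fin n)) : Finset (Fin n) :=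
  Finset.univ.filter (fun v => ∀ u ∈ S, G.Adj u v)

open scoped Classical in
lemma mem_cN {n : ℕ} {G : SimpleGraph (Fin n)} {S : Finset (Fin n)} {v : Fin n} :
    v ∈ cN G S ↔ ∀ u ∈ S, G.Adj u v := by
  simp [cN]

noncomputable def pick {α : Type*} (s : ℕ) (Q : Finset α) : Finset α :=
  if h : s ≤ Q.card then (Finset.exists_subset_card_eq h).choose else ∅

lemma pick_subset {α : Type*} {s : ℕ} {Q : Finset α} (h : s ≤ Q.card) : pick s Q ⊆ Q := by
  rw [pick, dif_pos h]; exact (Finset.exists_subset_card_eq h).choose_spec.1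

lemma pick_card {α : Type*} {s : ℕ} {Q : Finset α} (h : s ≤ Q.card) : (pick s Q).card = s := by
  rw [pick, dif_pos h]; exact (Finset.exists_subset_card_eq h).choose_spec.2

lemma nbhd_bound {n s t : ℕ} {G : SimpleGraph (Fin n)}
    (hfree : ¬ Contains (completeBipartiteGraph (Fin s) (Fin t)) G)
    {S : Finset (Fin n)} (hS : S.card = s) : (cN G S).card < t := by
  by_contra h
  push_neg at h
  obtain ⟨T, hTsub, hTcard⟩ := Finset.exists_subset_card_eq h
  refine hfree ⟨⟨Sum.elim (fun i => ((Finset.equivFinOfCardEq hS).symm i : Fin n))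
    (fun j => ((Finset.equivFinOfCardEq hTcard).symm j : Fin n)), ?_, ?_⟩⟩
  · rintro (i | i) (j | j) hij
    · simpa [Subtype.coe_injective.eq_iff, (Finset.equivFinOfCardEq hS).symm.injective.eq_iff]
        using hij
    · exfalso
      have hv : ((Finset.equivFinOfCardEq hTcard).symm j : Fin n) ∈ cN G S :=
        hTsub ((Finset.equivFinOfCardEq hTcard).symm j).2
      have hu : ((Finset.equivFinOfCardEq hS).symm i : Fin n) ∈ S :=
        ((Finset.equivFinOfCardEq hS).symm i).2
      have := mem_cN.1 hv _ hu
      rw [Sum.elim_inl, Sum.elim_inr] at hij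
      rw [hij] at this
      exact G.irrefl this
    · exfalso
      have hv : ((Finset.equivFinOfCardEq hTcard).symm i : Fin n) ∈ cN G S :=
        hTsub ((Finset.equivFinOfCardEq hTcard).symm i).2
      have hu : ((Finset.equivFinOfCardEq hS).symm j : Fin n) ∈ S :=
        ((Finset.equivFinOfCardEq hS).symm j).2
      have := mem_cN.1 hv _ hu
      rw [Sum.elim_inl, Sum.elim_inr] at hij
      rw [← hij] at this
      exact G.irrefl this
    · simpa [Subtype.coe_injective.eq_iff, (Finset.equivFinOfCardEq hTcard).symm.injective.eq_iff]
        using hij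
  · rintro (i | i) (j | j) hadj
    · simp at hadj
    · have hv : ((Finset.equivFinOfCardEq hTcard).symm j : Fin n) ∈ cN G S :=
        hTsub ((Finset.equivFinOfCardEq hTcard).symm j).2
      exact mem_cN.1 hv _ ((Finset.equivFinOfCardEq hS).symm i).2
    · have hv : ((Finset.equivFinOfCardEq hTcard).symm i : Fin n) ∈ cN G S :=
        hTsub ((Finset.equivFinOfCardEq hTcard).symm i).2
      exact (mem_cN.1 hv _ ((Finset.equivFinOfCardEq hS).symm j).2).symm
    · simp at hadj

section Struct
variable {n a b : ℕ} {G : SimpleGraph (Fin n)} {A : G.Subgraph}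
  (e : completeBipartiteGraph (Fin a) (Fin b) ≃g A.coe)

noncomputable def sideP : Finset (Fin n) :=
  Finset.univ.image fun i : Fin a => ((e (Sum.inl i)) : Fin n)

noncomputable def sideQ : Finset (Fin n) :=
  Finset.univ.image fun j : Fin b => ((e (Sum.inr j)) : Fin n)

lemma sideP_card : (sideP e).card = a := by
  rw [sideP, Finset.card_image_of_injective _ (fun i j h => by
    simpa using e.toEquiv.injective (Subtype.coe_injective h))]
  simp

lemma sideQ_card : (sideQ e).card = b := by
  rw [sideQ, Finset.card_image_of_injective _ (fun i j h => by
    simpa using e.toEquiv.injective (Subtype.coe_injective h))]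
  simp

lemma verts_eq : A.verts = ↑(sideP e) ∪ ↑(sideQ e) := by
  ext v
  constructor
  · intro hv
    rcases hx : e.symm ⟨v, hv⟩ with i | j
    · left
      simp only [Finset.coe_image, Set.mem_image, sideP]
      refine ⟨i, by simp, ?_⟩
      rw [← hx]; simp
    · right
      simp only [Finset.coe_image, Set.mem_image, sideQ]
      refine ⟨j, by simp, ?_⟩
      rw [← hx]; simp
  · rintro (hv | hv) <;>
    · simp only [Finset.coe_image, Set.mem_image, sideP, sideQ] at hv
      obtain ⟨i, -, rfl⟩ := hv
      exact (e _).2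

lemma adj_iff (u v : Fin n) :
    A.Adj u v ↔ (u ∈ sideP e ∧ v ∈ sideQ e) ∨ (v ∈ sideP e ∧ u ∈ sideQ e) := by
  constructor
  · intro hadj
    have hu : u ∈ A.verts := A.edge_vert hadj
    have hv : v ∈ A.verts := A.edge_vert hadj.symm
    have hc : A.coe.Adj ⟨u, hu⟩ ⟨v, hv⟩ := hadj
    have hK : (completeBipartiteGraph (Fin a) (Fin b)).Adj
        (e.symm ⟨u, hu⟩) (e.symm ⟨v, hv⟩) := by
      rw [← e.map_adj_iff]; simpa using hc
    have hPu : ∀ i : Fin a, e.symm ⟨u, hu⟩ = Sum.inl i → u ∈ sideP e := by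
      intro i hi
      simp only [sideP, Finset.mem_image]
      exact ⟨i, by simp, by rw [← hi]; simp⟩
    have hQu : ∀ j : Fin b, e.symm ⟨u, hu⟩ = Sum.inr j → u ∈ sideQ e := by
      intro j hj
      simp only [sideQ, Finset.mem_image]
      exact ⟨j, by simp, by rw [← hj]; simp⟩
    have hPv : ∀ i : Fin a, e.symm ⟨v, hv⟩ = Sum.inl i → v ∈ sideP e := by
      intro i hi
      simp only [sideP, Finset.mem_image]
      exact ⟨i, by simp, by rw [← hi]; simp⟩
    have hQv : ∀ j : Fin b, e.symm ⟨v, hv⟩ = Sum.inr j → v ∈ sideQ e := by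
      intro j hj
      simp only [sideQ, Finset.mem_image]
      exact ⟨j, by simp, by rw [← hj]; simp⟩
    rcases hx : e.symm ⟨u, hu⟩ with i | j <;> rcases hy : e.symm ⟨v, hv⟩ with i' | j'
    · rw [hx, hy] at hK; simp at hK
    · exact Or.inl ⟨hPu i hx, hQv j' hy⟩
    · exact Or.inr ⟨hPv i' hy, hQu j hx⟩
    · rw [hx, hy] at hK; simp at hK
  · rintro (⟨hu, hv⟩ | ⟨hv, hu⟩)
    · simp only [sideP, sideQ, Finset.mem_image] at hu hv
      obtain ⟨i, -, rfl⟩ := hu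
      obtain ⟨j, -, rfl⟩ := hv
      have : A.coe.Adj (e (Sum.inl i)) (e (Sum.inr j)) := e.map_adj_iff.2 (by simp)
      exact this
    · simp only [sideP, sideQ, Finset.mem_image] at hu hv
      obtain ⟨i, -, rfl⟩ := hv
      obtain ⟨j, -, rfl⟩ := hu
      have : A.coe.Adj (e (Sum.inl i)) (e (Sum.inr j)) := e.map_adj_iff.2 (by simp)
      exact this.symm

end Struct

/-- In a `K_{s,t}`-free graph on `n` vertices with `s ≤ a ≤ b ≤ t`,
the number of copies of `K_{a,b}` is at most `C(n,s)·C(t-1,a)·C(t-1,b-s)`. -/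
theorem stmt11 (a b s t n : ℕ) (ha : 1 ≤ a) (hab : a ≤ b) (hbt : b ≤ t)
    (hsa : s ≤ a) (hst : s ≤ t) (G : SimpleGraph (Fin n))
    (hfree : ¬ Contains (completeBipartiteGraph (Fin s) (Fin t)) G) :
    _root_.copyCount (completeBipartiteGraph (Fin a) (Fin b)) G ≤
      n.choose s * (t - 1).choose a * (t - 1).choose (b - s) := by
  classical
  have hsb : s ≤ b := hsa.trans hab
  set 𝒞 := {A : G.Subgraph | Nonempty (completeBipartiteGraph (Fin a) (Fin b) ≃g A.coe)}
    with h𝒞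
  have key : ∀ A ∈ 𝒞, ∃ P Q : Finset (Fin n), P.card = a ∧ Q.card = b ∧
      A.verts = ↑P ∪ ↑Q ∧
      (∀ u v, A.Adj u v ↔ (u ∈ P ∧ v ∈ Q) ∨ (v ∈ P ∧ u ∈ Q)) := by
    intro A hA
    obtain ⟨e⟩ := hA
    exact ⟨sideP e, sideQ e, sideP_card e, sideQ_card e, verts_eq e, adj_iff e⟩
  choose! P Q hPa hQb hverts hadj using key
  -- bound on neighborhoods
  have hcN : ∀ S : Finset (Fin n), S.card = s → (cN G S).card ≤ t - 1 :=
    fun S hS => Nat.le_pred_of_lt (nbhd_bound hfree hS)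
  -- target finset
  set T : Finset (Finset (Fin n) × Finset (Fin n) × Finset (Fin n)) :=
    (Finset.univ.powersetCard s).biUnion fun S =>
      ((cN G S).powersetCard a).biUnion fun Pp =>
        {S} ×ˢ {Pp} ×ˢ ((cN G (pick s Pp)).powersetCard (b - s)) with hT
  -- facts for A ∈ 𝒞
  have hΦ : ∀ A ∈ 𝒞, (pick s (Q A), P A, Q A \ pick s (Q A)) ∈ T := by
    intro A hA
    have hsQ : s ≤ (Q A).card := by rw [hQb A hA]; exact hsb
    have hsP : s ≤ (P A).card := by rw [hPa A hA]; exact hsa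
    have hSsub : pick s (Q A) ⊆ Q A := pick_subset hsQ
    have hScard : (pick s (Q A)).card = s := pick_card hsQ
    have hPsub : P A ⊆ cN G (pick s (Q A)) := by
      intro v hv
      rw [mem_cN]
      intro u hu
      have : A.Adj v u := (hadj A hA v u).2 (Or.inl ⟨hv, hSsub hu⟩)
      exact (A.adj_sub this).symm
    have hRsub : Q A \ pick s (Q A) ⊆ cN G (pick s (P A)) := by
      intro q hq
      rw [mem_cN]
      intro u hu
      have : A.Adj u q := (hadj A hA u q).2
        (Or.inl ⟨pick_subset hsP hu, (Finset.sdiff_subset) hq⟩)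
      exact A.adj_sub this
    have hRcard : (Q A \ pick s (Q A)).card = b - s := by
      rw [Finset.card_sdiff_of_subset hSsub, hScard, hQb A hA]
    rw [hT]
    refine Finset.mem_biUnion.2 ⟨pick s (Q A),
      Finset.mem_powersetCard.2 ⟨Finset.subset_univ _, hScard⟩,
      Finset.mem_biUnion.2 ⟨P A,
        Finset.mem_powersetCard.2 ⟨hPsub, hPa A hA⟩, ?_⟩⟩
    simp only [Finset.mem_product, Finset.mem_singleton]
    exact ⟨trivial, trivial, Finset.mem_powersetCard.2 ⟨hRsub, hRcard⟩⟩
  -- injectivity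
  have hinj : Set.InjOn (fun A => (pick s (Q A), P A, Q A \ pick s (Q A))) 𝒞 := by
    intro A₁ h₁ A₂ h₂ heq
    simp only [Prod.mk.injEq] at heq
    obtain ⟨hS, hP, hR⟩ := heq
    have hsQ₁ : s ≤ (Q A₁).card := by rw [hQb A₁ h₁]; exact hsb
    have hsQ₂ : s ≤ (Q A₂).card := by rw [hQb A₂ h₂]; exact hsb
    have hQeq : Q A₁ = Q A₂ := by
      rw [← Finset.union_sdiff_of_subset (pick_subset hsQ₁), hR, hS,
        Finset.union_sdiff_of_subset (pick_subset hsQ₂)]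
    apply SimpleGraph.Subgraph.ext
    · rw [hverts A₁ h₁, hverts A₂ h₂, hP, hQeq]
    · funext u v
      rw [eq_iff_iff, hadj A₁ h₁ u v, hadj A₂ h₂ u v, hP, hQeq]
  -- counting
  have h1 : _root_.copyCount (completeBipartiteGraph (Fin a) (Fin b)) G ≤ T.card := by
    rw [_root_.copyCount, ← h𝒞, ← Set.ncard_coe_finset]
    exact Set.ncard_le_ncard_of_injOn _ (fun A hA => hΦ A hA) hinj (Finset.finite_toSet T)
  refine h1.trans ?_
  calc T.card ≤ ∑ S ∈ Finset.univ.powersetCard s,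
        (((cN G S).powersetCard a).biUnion fun Pp =>
          {S} ×ˢ {Pp} ×ˢ ((cN G (pick s Pp)).powersetCard (b - s))).card :=
        Finset.card_biUnion_le
    _ ≤ ∑ S ∈ Finset.univ.powersetCard s, ∑ Pp ∈ (cN G S).powersetCard a,
        ({S} ×ˢ {Pp} ×ˢ ((cN G (pick s Pp)).powersetCard (b - s))).card :=
        Finset.sum_le_sum fun S _ => Finset.card_biUnion_le
    _ ≤ ∑ S ∈ Finset.univ.powersetCard s, ∑ Pp ∈ (cN G S).powersetCard a,
        (t - 1).choose (b - s) := by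
        refine Finset.sum_le_sum fun S hS => Finset.sum_le_sum fun Pp hPp => ?_
        have hScard := (Finset.mem_powersetCard.1 hS).2
        have hPpcard := (Finset.mem_powersetCard.1 hPp).2
        have hsPp : s ≤ Pp.card := by rw [hPpcard]; exact hsa
        have : ({S} ×ˢ {Pp} ×ˢ ((cN G (pick s Pp)).powersetCard (b - s))).card
            = ((cN G (pick s Pp)).card).choose (b - s) := by
          simp [Finset.card_product, Finset.card_powersetCard]
        rw [this]
        exact Nat.choose_le_choose _ (hcN _ (pick_card hsPp))
    _ ≤ ∑ S ∈ Finset.univ.powersetCard s, (t - 1).choose a * (t - 1).choose (b - s) := by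
        refine Finset.sum_le_sum fun S hS => ?_
        rw [Finset.sum_const, Finset.card_powersetCard, smul_eq_mul]
        exact Nat.mul_le_mul_right _
          (Nat.choose_le_choose _ (hcN _ (Finset.mem_powersetCard.1 hS).2))
    _ = n.choose s * (t - 1).choose a * (t - 1).choose (b - s) := by
        rw [Finset.sum_const, Finset.card_powersetCard, smul_eq_mul]
        simp [mul_assoc]
end

section
/- Let a < s ≤ b ≤ t. The complete bipartite graph K_{s-1, n-s+1} is K_{s,t}-free and contains at least C(s-1, a) · C(n-s+1, b) copies of K_{a,b}, where C(·,·) denotes the binomial coefficient. -/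
open SimpleGraph

universe u v

section MyAux

instance subgraphFinite {V : Type} [Finite V] (G : SimpleGraph V) : Finite G.Subgraph :=
  Finite.of_injective (fun A => (A.verts, A.Adj))
    (fun _ _ h => SimpleGraph.Subgraph.ext (congrArg Prod.fst h) (congrArg Prod.snd h))

/-- The subgraph of a complete bipartite graph induced by `S` on the left and `T` on the right. -/
def mkSub {α β : Type} (S : Finset α) (T : Finset β) :
    (completeBipartiteGraph α β).Subgraph where
  verts := Sum.inl '' ↑S ∪ Sum.inr '' ↑T
  Adj u v := (u ∈ Sum.inl '' (S : Set α) ∧ v ∈ Sum.inr '' (T : Set β)) ∨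
             (u ∈ Sum.inr '' (T : Set β) ∧ v ∈ Sum.inl '' (S : Set α))
  adj_sub := by rintro u v (⟨⟨x,_,rfl⟩,⟨y,_,rfl⟩⟩|⟨⟨x,_,rfl⟩,⟨y,_,rfl⟩⟩) <;> simp
  edge_vert := by rintro u v (⟨h,-⟩|⟨h,-⟩); exacts [Or.inl h, Or.inr h]
  symm := ⟨by rintro u v (⟨h1,h2⟩|⟨h1,h2⟩); exacts [Or.inr ⟨h2,h1⟩, Or.inl ⟨h2,h1⟩]⟩

lemma mkSub_inj {α β : Type} {S S' : Finset α} {T T' : Finset β}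
    (h : mkSub S T = mkSub S' T') : S = S' ∧ T = T' := by
  have hv := congrArg SimpleGraph.Subgraph.verts h
  simp only [mkSub, Set.ext_iff] at hv
  constructor
  · ext x; simpa using hv (Sum.inl x)
  · ext y; simpa using hv (Sum.inr y)

noncomputable def mkSubIso {α β : Type} (S : Finset α) (T : Finset β) {a b : ℕ}
    (hS : S.card = a) (hT : T.card = b) :
    completeBipartiteGraph (Fin a) (Fin b) ≃g (mkSub S T).coe := by
  classical
  let eS : Fin a ≃ ↥S := (S.equivFinOfCardEq hS).symm
  let eT : Fin b ≃ ↥T := (T.equivFinOfCardEq hT).symm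
  let φ : Fin a ⊕ Fin b → ↥(mkSub S T).verts :=
    Sum.elim (fun i => ⟨Sum.inl (eS i), Or.inl ⟨_, (eS i).2, rfl⟩⟩)
             (fun j => ⟨Sum.inr (eT j), Or.inr ⟨_, (eT j).2, rfl⟩⟩)
  have hbij : Function.Bijective φ := by
    constructor
    · rintro (i|j) (i'|j') h <;> simp only [Subtype.ext_iff] at h <;> simp only [φ, Sum.elim_inl, Sum.elim_inr, Subtype.mk.injEq,
        Sum.inl.injEq, Sum.inr.injEq, reduceCtorEq] at h
      · exact congrArg Sum.inl (eS.injective (Subtype.ext h))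
      · exact congrArg Sum.inr (eT.injective (Subtype.ext h))
    · rintro ⟨v, ⟨x, hx, rfl⟩ | ⟨y, hy, rfl⟩⟩
      · exact ⟨Sum.inl (eS.symm ⟨x, hx⟩), by simp [φ]⟩
      · exact ⟨Sum.inr (eT.symm ⟨y, hy⟩), by simp [φ]⟩
  refine ⟨Equiv.ofBijective φ hbij, ?_⟩
  rintro (i|j) (i'|j') <;> simp only [Equiv.ofBijective_apply] <;>
    simp [φ, mkSub, SimpleGraph.Subgraph.coe_adj, Equiv.ofBijective, Set.mem_image,
      (eS _).2, (eT _).2]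

end MyAux

/-- For `a < s ≤ b ≤ t`, the graph `K_{s-1, n-s+1}` is `K_{s,t}`-free
and contains at least `C(s-1,a)·C(n-s+1,b)` copies of `K_{a,b}`. -/
theorem stmt12 (a b s t n : ℕ) (has : a < s) (hsb : s ≤ b) (hbt : b ≤ t) (hn : s ≤ n) :
    ¬ Contains (completeBipartiteGraph (Fin s) (Fin t))
        (completeBipartiteGraph (Fin (s - 1)) (Fin (n - s + 1)))
    ∧ (s - 1).choose a * (n - s + 1).choose b ≤
        _root_.copyCount (completeBipartiteGraph (Fin a) (Fin b))
          (completeBipartiteGraph (Fin (s - 1)) (Fin (n - s + 1))) := by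
  have hs0 : 0 < s := Nat.lt_of_le_of_lt (Nat.zero_le a) has
  have ht0 : 0 < t := lt_of_lt_of_le hs0 (hsb.trans hbt)
  constructor
  · rintro ⟨f⟩
    rcases h0 : f.toFun (Sum.inr ⟨0, ht0⟩) with c | c
    · -- all images of left vertices are right
      have h1 : ∀ i : Fin s, (f.toFun (Sum.inl i)).isRight := by
        intro i
        have hadj := f.adj (a := Sum.inl i) (b := Sum.inr ⟨0, ht0⟩) (by simp)
        rw [h0] at hadj
        simpa using hadj
      obtain ⟨d, hd⟩ := Sum.isRight_iff.mp (h1 ⟨0, hs0⟩)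
      have h2 : ∀ j : Fin t, ∃ e, f.toFun (Sum.inr j) = Sum.inl e := by
        intro j
        have hadj := f.adj (a := Sum.inl ⟨0, hs0⟩) (b := Sum.inr j) (by simp)
        rw [hd] at hadj
        simpa [Sum.isLeft_iff] using hadj
      choose g hg using h2
      have ginj : Function.Injective g := by
        intro j j' h
        have := f.inj (a₁ := Sum.inr j) (a₂ := Sum.inr j') (by rw [hg, hg, h])
        exact Sum.inr.inj this
      have := Fintype.card_le_of_injective g ginj
      simp only [Fintype.card_fin] at this
      omega
    · have h1 : ∀ i : Fin s, ∃ e, f.toFun (Sum.inl i) = Sum.inl e := by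
        intro i
        have hadj := f.adj (a := Sum.inl i) (b := Sum.inr ⟨0, ht0⟩) (by simp)
        rw [h0] at hadj
        simpa [Sum.isLeft_iff] using hadj
      choose g hg using h1
      have ginj : Function.Injective g := by
        intro i i' h
        have := f.inj (a₁ := Sum.inl i) (a₂ := Sum.inl i') (by rw [hg, hg, h])
        exact Sum.inl.inj this
      have := Fintype.card_le_of_injective g ginj
      simp only [Fintype.card_fin] at this
      omega
  · classical
    set α := Fin (s - 1)
    set β := Fin (n - s + 1)
    let D := {S : Finset α // S.card = a} × {T : Finset β // T.card = b}
    let F : D → (completeBipartiteGraph α β).Subgraph := fun p => mkSub p.1.1 p.2.1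
    have Finj : Function.Injective F := by
      intro p q h
      obtain ⟨h1, h2⟩ := mkSub_inj h
      exact Prod.ext (Subtype.ext h1) (Subtype.ext h2)
    have hsub : Set.range F ⊆
        {A : (completeBipartiteGraph α β).Subgraph |
          Nonempty (completeBipartiteGraph (Fin a) (Fin b) ≃g A.coe)} := by
      rintro A ⟨p, rfl⟩
      exact ⟨mkSubIso p.1.1 p.2.1 p.1.2 p.2.2⟩
    unfold _root_.copyCount
    calc (s - 1).choose a * (n - s + 1).choose b
        = Fintype.card D := by
          simp [D, Fintype.card_prod, Fintype.card_finset_len, α, β]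
      _ = (Set.univ : Set D).ncard := by rw [Set.ncard_univ, Nat.card_eq_fintype_card]
      _ = (F '' Set.univ).ncard := (Set.ncard_image_of_injective _ Finj).symm
      _ = (Set.range F).ncard := by rw [Set.image_univ]
      _ ≤ _ := Set.ncard_le_ncard hsub (Set.toFinite _)
end
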